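/- The number of permutations of {1,…,n} (n ≥ 2) avoiding the three consecutive patterns 123, 231, 312 equals n · E_{n-1}, where E_m is the m-th Euler (zigzag) number counting alternating permutations of length m. -/

import Mathlib

/-- The Euler (zigzag) number `E m`: the number of alternating permutations
τ ∈ S_m with τ(1) > τ(2) < τ(3) > ⋯ . -/
noncomputable def eulerNumber (m : ℕ) : ℕ :=
  Nat.card {τ : Equiv.Perm (Fin m) //
    ∀ (i : ℕ) (h : i + 1 < m),
      if i % 2 = 0 then τ ⟨i + 1, h⟩ < τ ⟨i, by omega⟩
      else τ ⟨i, by omega⟩ < τ ⟨i + 1, h⟩}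

namespace ZigzagAux

variable {n : ℕ}

/-- rank of `x` in `s` w.r.t. key function `g`. -/
def rank (g : Fin n → ℕ) (s : Finset (Fin n)) (x : Fin n) : ℕ :=
  (s.filter fun y => g y ≤ g x).card

lemma one_le_rank {g : Fin n → ℕ} {s : Finset (Fin n)} {x : Fin n} (hx : x ∈ s) :
    1 ≤ rank g s x := by
  have : x ∈ s.filter fun y => g y ≤ g x := Finset.mem_filter.2 ⟨hx, le_rfl⟩
  simpa [rank] using Finset.card_pos.2 ⟨x, this⟩

lemma rank_le_card {g : Fin n → ℕ} {s : Finset (Fin n)} {x : Fin n} :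
    rank g s x ≤ s.card := Finset.card_filter_le _ _

lemma rank_lt_rank {g : Fin n → ℕ} {s : Finset (Fin n)} {x y : Fin n}
    (hy : y ∈ s) (hxy : g x < g y) : rank g s x < rank g s y := by
  apply Finset.card_lt_card
  constructor
  · intro z hz
    rw [Finset.mem_filter] at hz ⊢
    exact ⟨hz.1, le_trans hz.2 (le_of_lt hxy)⟩
  · intro hsub
    have : y ∈ s.filter fun z => g z ≤ g y := Finset.mem_filter.2 ⟨hy, le_rfl⟩
    have := hsub this
    rw [Finset.mem_filter] at this
    omega

lemma rank_injOn {g : Fin n → ℕ} (hg : Function.Injective g) {s : Finset (Fin n)}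
    {x y : Fin n} (hx : x ∈ s) (hy : y ∈ s) (h : rank g s x = rank g s y) : x = y := by
  by_contra hne
  have hgne : g x ≠ g y := fun hc => hne (hg hc)
  rcases lt_or_gt_of_ne hgne with hlt | hlt
  · exact absurd h (Nat.ne_of_lt (rank_lt_rank hy hlt))
  · exact absurd h.symm (Nat.ne_of_lt (rank_lt_rank hx hlt))

lemma exists_rank {g : Fin n → ℕ} (hg : Function.Injective g) {s : Finset (Fin n)}
    {r : ℕ} (hr1 : 1 ≤ r) (hr2 : r ≤ s.card) : ∃ x ∈ s, rank g s x = r := by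
  have hsurj := Finset.surj_on_of_inj_on_of_card_le
    (s := s) (t := Finset.Icc 1 s.card)
    (f := fun a _ => rank g s a)
    (fun a ha => Finset.mem_Icc.2 ⟨one_le_rank ha, rank_le_card⟩)
    (fun a₁ a₂ ha₁ ha₂ h => rank_injOn hg ha₁ ha₂ h)
    (by simp [Nat.card_Icc])
  obtain ⟨a, ha, hra⟩ := hsurj r (Finset.mem_Icc.2 ⟨hr1, hr2⟩)
  exact ⟨a, ha, hra.symm⟩

/-- the element of `s` having rank `r` (junk value if none). -/
noncomputable def pick (hn : 0 < n) (g : Fin n → ℕ) (s : Finset (Fin n)) (r : ℕ) : Fin n :=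
  if h : ∃ x ∈ s, rank g s x = r then h.choose else ⟨0, hn⟩

lemma pick_spec {hn : 0 < n} {g : Fin n → ℕ} {s : Finset (Fin n)} {r : ℕ}
    (h : ∃ x ∈ s, rank g s x = r) :
    pick hn g s r ∈ s ∧ rank g s (pick hn g s r) = r := by
  rw [pick, dif_pos h]
  exact ⟨h.choose_spec.1, h.choose_spec.2⟩

lemma pick_rank {hn : 0 < n} {g : Fin n → ℕ} (hg : Function.Injective g)
    {s : Finset (Fin n)} {x : Fin n} (hx : x ∈ s) :
    pick hn g s (rank g s x) = x := by
  have h : ∃ y ∈ s, rank g s y = rank g s x := ⟨x, hx, rfl⟩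
  have := pick_spec (hn := hn) h
  exact rank_injOn hg this.1 hx this.2

/-- decode: value and used-set after step j. -/
noncomputable def decP (hn : 0 < n) (key : ℕ → Fin n → Fin n → ℕ) (b : ℕ → ℕ) :
    ℕ → Fin n × Finset (Fin n)
  | 0 =>
    let x := pick hn (key 0 ⟨0, hn⟩) Finset.univ (b 0)
    (x, {x})
  | j + 1 =>
    let p := decP hn key b j
    let x := pick hn (key (j + 1) p.1) (Finset.univ \ p.2) (b (j + 1))
    (x, insert x p.2)

noncomputable def dec (hn : 0 < n) (key : ℕ → Fin n → Fin n → ℕ) (b : ℕ → ℕ) (j : ℕ) : Fin n :=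
  (decP hn key b j).1

/-- extend a `Fin n`-indexed function to ℕ. -/
def fext (hn : 0 < n) (f : Fin n → Fin n) (i : ℕ) : Fin n :=
  if h : i < n then f ⟨i, h⟩ else ⟨0, hn⟩

/-- the "remaining" set after the first `j` values of `f` are used. -/
def Sset (hn : 0 < n) (f : Fin n → Fin n) (j : ℕ) : Finset (Fin n) :=
  Finset.univ \ (Finset.range j).image (fext hn f)

/-- the generalized code of `f`. -/
noncomputable def enc (hn : 0 < n) (key : ℕ → Fin n → Fin n → ℕ) (f : Fin n → Fin n)
    (j : Fin n) : ℕ :=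
  rank (key j.val (if j.val = 0 then ⟨0, hn⟩ else f ⟨j.val - 1, by omega⟩))
    (Sset hn f j.val) (f j)



section Main

variable (hn : 0 < n) (key : ℕ → Fin n → Fin n → ℕ)

lemma used_zero (b : ℕ → ℕ) : (decP hn key b 0).2 = {dec hn key b 0} := rfl

lemma used_succ (b : ℕ → ℕ) (j : ℕ) :
    (decP hn key b (j + 1)).2 = insert (dec hn key b (j + 1)) (decP hn key b j).2 := rfl

/-- main validity lemma for decoding a valid code. -/
lemma dec_valid (hkey : ∀ j p, Function.Injective (key j p)) (b : ℕ → ℕ) (hb : ∀ j, j < n → 1 ≤ b j ∧ b j ≤ n - j) :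
    ∀ j, j < n →
      ((decP hn key b j).2 = (Finset.range (j + 1)).image (dec hn key b)) ∧
      ((decP hn key b j).2.card = j + 1) ∧
      (match j with
       | 0 => dec hn key b 0 ∈ (Finset.univ : Finset (Fin n)) ∧
           rank (key 0 ⟨0, hn⟩) Finset.univ (dec hn key b 0) = b 0
       | (i + 1) => dec hn key b (i + 1) ∈ Finset.univ \ (decP hn key b i).2 ∧
           rank (key (i + 1) (dec hn key b i)) (Finset.univ \ (decP hn key b i).2)
             (dec hn key b (i + 1)) = b (i + 1)) := by
  intro j
  induction j with
  | zero =>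
    intro hj
    have hcard : (Finset.univ : Finset (Fin n)).card = n := by simp
    have hex : ∃ x ∈ (Finset.univ : Finset (Fin n)),
        rank (key 0 ⟨0, hn⟩) Finset.univ x = b 0 := by
      apply exists_rank (hkey 0 _) (hb 0 hj).1
      rw [hcard]; have := (hb 0 hj).2; omega
    have hps := pick_spec (hn := hn) hex
    refine ⟨?_, ?_, hps.1, hps.2⟩
    · simp [used_zero, Finset.range_one]
    · simp [used_zero]
  | succ i ih =>
    intro hj
    have hi : i < n := by omega
    obtain ⟨hused, hcard, _⟩ := ih hi
    have hscard : (Finset.univ \ (decP hn key b i).2).card = n - (i + 1) := by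
      rw [Finset.card_sdiff_of_subset (Finset.subset_univ _), hcard]
      simp
    have hex : ∃ x ∈ Finset.univ \ (decP hn key b i).2,
        rank (key (i + 1) (dec hn key b i)) (Finset.univ \ (decP hn key b i).2) x
          = b (i + 1) := by
      apply exists_rank (hkey _ _) (hb (i + 1) hj).1
      rw [hscard]; exact (hb (i + 1) hj).2
    have hps := pick_spec (hn := hn) hex
    have hnotmem : dec hn key b (i + 1) ∉ (decP hn key b i).2 :=
      (Finset.mem_sdiff.1 hps.1).2
    refine ⟨?_, ?_, hps.1, hps.2⟩
    · rw [used_succ, hused, ← Finset.image_insert, ← Finset.range_add_one]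
    · rw [used_succ, Finset.card_insert_of_notMem hnotmem, hcard]

lemma used_mono (b : ℕ → ℕ) {i j : ℕ} (h : i ≤ j) :
    (decP hn key b i).2 ⊆ (decP hn key b j).2 := by
  induction j with
  | zero => have : i = 0 := by omega
            subst this; exact Finset.Subset.refl _
  | succ k ih =>
    rcases Nat.lt_or_ge i (k + 1) with h' | h'
    · intro x hx
      rw [used_succ]
      exact Finset.mem_insert_of_mem (ih (by omega) hx)
    · have : i = k + 1 := by omega
      subst this; exact Finset.Subset.refl _

lemma dec_mem_used (b : ℕ → ℕ) (j : ℕ) : dec hn key b j ∈ (decP hn key b j).2 := by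
  cases j with
  | zero => simp [used_zero]
  | succ i => rw [used_succ]; exact Finset.mem_insert_self _ _

lemma dec_inj (hkey : ∀ j p, Function.Injective (key j p)) (b : ℕ → ℕ) (hb : ∀ j, j < n → 1 ≤ b j ∧ b j ≤ n - j)
    {i j : ℕ} (hij : i < j) (hjn : j < n) : dec hn key b i ≠ dec hn key b j := by
  intro hcontra
  obtain ⟨_, _, hm⟩ := dec_valid hn key hkey b hb j hjn
  cases j with
  | zero => omega
  | succ k =>
    have hnotmem : dec hn key b (k + 1) ∉ (decP hn key b k).2 := (Finset.mem_sdiff.1 hm.1).2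
    have : dec hn key b i ∈ (decP hn key b k).2 :=
      used_mono hn key b (by omega : i ≤ k) (dec_mem_used hn key b i)
    rw [hcontra] at this
    exact hnotmem this

/-- decoded function as a `Fin n` map, and its bijectivity. -/
noncomputable def fdec (b : ℕ → ℕ) : Fin n → Fin n := fun j => dec hn key b j.val

lemma fdec_bijective (hkey : ∀ j p, Function.Injective (key j p)) (b : ℕ → ℕ)
    (hb : ∀ j, j < n → 1 ≤ b j ∧ b j ≤ n - j) :
    Function.Bijective (fdec hn key b) := by
  have hinj : Function.Injective (fdec hn key b) := by
    intro i j hij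
    by_contra hne
    have hne' : i.val ≠ j.val := fun hc => hne (Fin.ext hc)
    rcases Nat.lt_or_ge i.val j.val with h | h
    · exact dec_inj hn key hkey b hb h j.isLt hij
    · exact dec_inj hn key hkey b hb (by omega) i.isLt hij.symm
  exact Finite.injective_iff_bijective.mp hinj


lemma Sset_zero (f : Fin n → Fin n) : Sset hn f 0 = Finset.univ := by
  simp [Sset]

lemma mem_Sset {f : Fin n → Fin n} {j : ℕ} {x : Fin n} :
    x ∈ Sset hn f j ↔ ∀ i, i < j → fext hn f i ≠ x := by
  simp only [Sset, Finset.mem_sdiff, Finset.mem_univ, true_and, Finset.mem_image,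
    Finset.mem_range, not_exists, not_and]

lemma self_mem_Sset {f : Fin n → Fin n} (hf : Function.Injective f) (j : Fin n) :
    f j ∈ Sset hn f j.val := by
  rw [mem_Sset]
  intro i hi hcontra
  have hin : i < n := lt_trans hi j.isLt
  rw [fext, dif_pos hin] at hcontra
  have := hf hcontra
  have : i = j.val := congrArg Fin.val this
  omega

lemma Sset_card {f : Fin n → Fin n} (hf : Function.Injective f) {j : ℕ} (hj : j ≤ n) :
    (Sset hn f j).card = n - j := by
  rw [Sset, Finset.card_sdiff_of_subset (Finset.subset_univ _), Finset.card_univ, Fintype.card_fin]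
  congr 1
  rw [Finset.card_image_of_injOn, Finset.card_range]
  intro i1 h1 i2 h2 heq
  rw [Finset.coe_range, Set.mem_Iio] at h1 h2
  have hi1 : i1 < n := by omega
  have hi2 : i2 < n := by omega
  rw [fext, dif_pos hi1, fext, dif_pos hi2] at heq
  have := congrArg Fin.val (hf heq)
  simpa using this

lemma enc_bounds (f : Fin n → Fin n) (hf : Function.Bijective f) (j : Fin n) :
    1 ≤ enc hn key f j ∧ enc hn key f j ≤ n - j.val := by
  constructor
  · exact one_le_rank (self_mem_Sset hn hf.injective j)
  · exact le_trans rank_le_card (le_of_eq (Sset_card hn hf.injective (le_of_lt j.isLt)))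

/-- decoding the code of a valid `b` gives back `b`. -/
lemma enc_dec (hkey : ∀ j p, Function.Injective (key j p)) (b : ℕ → ℕ)
    (hb : ∀ j, j < n → 1 ≤ b j ∧ b j ≤ n - j) (j : Fin n) :
    enc hn key (fdec hn key b) j = b j.val := by
  have husedS : ∀ i, i < n → Sset hn (fdec hn key b) (i + 1) =
      Finset.univ \ (decP hn key b i).2 := by
    intro i hi
    obtain ⟨hused, _, _⟩ := dec_valid hn key hkey b hb i hi
    rw [Sset, hused]
    congr 1
    apply Finset.image_congr
    intro x hx
    rw [Finset.coe_range, Set.mem_Iio] at hx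
    rw [fext, dif_pos (by omega : x < n)]
    rfl
  obtain ⟨jv, hjv⟩ := j
  cases jv with
  | zero =>
    obtain ⟨_, _, hm⟩ := dec_valid hn key hkey b hb 0 hjv
    simpa [enc, Sset_zero, fdec] using hm.2
  | succ i =>
    obtain ⟨_, _, hm⟩ := dec_valid hn key hkey b hb (i + 1) hjv
    have hS := husedS i (by omega)
    simp only [enc]
    rw [if_neg (by omega : ¬ (i + 1 = 0))]
    simp only [Nat.add_sub_cancel]
    rw [hS]
    exact hm.2

/-- extend a Fin-indexed code to ℕ. -/
def bext (c : Fin n → ℕ) (i : ℕ) : ℕ := if h : i < n then c ⟨i, h⟩ else 0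

/-- encoding then decoding gives back `f`. -/
lemma dec_enc (hkey : ∀ j p, Function.Injective (key j p)) (f : Fin n → Fin n)
    (hf : Function.Bijective f) :
    ∀ j, (hj : j < n) → dec hn key (bext (enc hn key f)) j = f ⟨j, hj⟩ := by
  set b : ℕ → ℕ := bext (enc hn key f) with hbdef
  have hb : ∀ j, j < n → 1 ≤ b j ∧ b j ≤ n - j := by
    intro j hj
    rw [hbdef, bext]
    rw [dif_pos hj]
    exact enc_bounds hn key f hf ⟨j, hj⟩
  intro j
  induction j using Nat.strong_induction_on with
  | _ j ih =>
    intro hj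
    cases j with
    | zero =>
      have hb0 : b 0 = rank (key 0 ⟨0, hn⟩) (Sset hn f 0) (f ⟨0, hj⟩) := by
        rw [hbdef, bext, dif_pos hj]
        simp [enc]
      show (decP hn key b 0).1 = f ⟨0, hj⟩
      simp only [decP]
      rw [hb0, Sset_zero]
      exact pick_rank (hkey 0 _) (Finset.mem_univ _)
    | succ i =>
      have hi : i < n := by omega
      -- used set equals image of f-prefix
      obtain ⟨hused, _, _⟩ := dec_valid hn key hkey b hb i hi
      have husedf : (decP hn key b i).2 = (Finset.range (i + 1)).image (fext hn f) := by
        rw [hused]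
        apply Finset.image_congr
        intro x hx
        rw [Finset.coe_range, Set.mem_Iio] at hx
        have hx' : x < n := by omega
        rw [fext, dif_pos hx']
        exact ih x (by omega) hx'
      have hSset : Finset.univ \ (decP hn key b i).2 = Sset hn f (i + 1) := by
        rw [husedf]; rfl
      have hprev : dec hn key b i = f ⟨i, hi⟩ := ih i (by omega) hi
      have hbsucc : b (i + 1) =
          rank (key (i + 1) (f ⟨i, hi⟩)) (Sset hn f (i + 1)) (f ⟨i + 1, hj⟩) := by
        rw [hbdef, bext, dif_pos hj]
        simp only [enc]
        rw [if_neg (by omega : ¬ (i + 1 = 0))]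
        simp only [Nat.add_sub_cancel]
      show (decP hn key b (i + 1)).1 = f ⟨i + 1, hj⟩
      simp only [decP]
      rw [show (decP hn key b i).1 = dec hn key b i from rfl, hprev, hSset, hbsucc]
      exact pick_rank (hkey _ _) (self_mem_Sset hn hf.injective ⟨i + 1, hj⟩)

/-- The generalized code bijection. -/
noncomputable def genEquiv (hkey : ∀ j p, Function.Injective (key j p)) :
    {f : Fin n → Fin n // Function.Bijective f} ≃
      {b : Fin n → ℕ // ∀ j : Fin n, 1 ≤ b j ∧ b j ≤ n - j.val} where
  toFun f := ⟨fun j => enc hn key f.1 j, fun j => enc_bounds hn key f.1 f.2 j⟩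
  invFun b := ⟨fun j => dec hn key (bext b.1) j.val,
    fdec_bijective hn key hkey (bext b.1)
      (fun j hj => by rw [bext, dif_pos hj]; exact b.2 ⟨j, hj⟩)⟩
  left_inv f := by
    apply Subtype.ext
    funext j
    exact dec_enc hn key hkey f.1 f.2 j.val j.isLt
  right_inv b := by
    apply Subtype.ext
    funext j
    have := enc_dec hn key hkey (bext b.1)
      (fun i hi => by rw [bext, dif_pos hi]; exact b.2 ⟨i, hi⟩) j
    show enc hn key (fun i : Fin n => dec hn key (bext b.1) i.val) j = b.1 j
    rw [show (fun i : Fin n => dec hn key (bext b.1) i.val) = fdec hn key (bext b.1)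
      from rfl]
    rw [this, bext, dif_pos j.isLt]

end Main

section Helpers

variable {n : ℕ}

lemma sum_ge_of_cover {α : Type*} [DecidableEq α] {S A B : Finset α} (hcover : S ⊆ A ∪ B) {v : α}
    (hvA : v ∈ A) (hvB : v ∈ B) : S.card + 1 ≤ A.card + B.card := by
  have h1 : S.card ≤ (A ∪ B).card := Finset.card_le_card hcover
  have h2 : 1 ≤ (A ∩ B).card := Finset.card_pos.2 ⟨v, Finset.mem_inter.2 ⟨hvA, hvB⟩⟩
  have h3 := Finset.card_union_add_card_inter A B
  omega

lemma sum_le_of_disjoint {α : Type*} [DecidableEq α] {S A B : Finset α} (hA : A ⊆ S) (hB : B ⊆ S)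
    (hdisj : ∀ x, x ∈ A → x ∈ B → False) : A.card + B.card ≤ S.card := by
  have h3 := Finset.card_union_add_card_inter A B
  have h2 : (A ∩ B).card = 0 := by
    rw [Finset.card_eq_zero]
    apply Finset.eq_empty_of_forall_notMem
    intro x hx
    rw [Finset.mem_inter] at hx
    exact hdisj x hx.1 hx.2
  have h1 : (A ∪ B).card ≤ S.card := Finset.card_le_card (Finset.union_subset hA hB)
  omega

/-- Sset at `j` is `Sset (j+1)` plus `f j`. -/
lemma Sset_succ {hn : 0 < n} {f : Fin n → Fin n} (hf : Function.Injective f)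
    {j : ℕ} (hj : j < n) :
    Sset hn f j = insert (f ⟨j, hj⟩) (Sset hn f (j + 1)) := by
  ext x
  rw [mem_Sset, Finset.mem_insert, mem_Sset]
  constructor
  · intro h
    by_cases hx : x = f ⟨j, hj⟩
    · exact Or.inl hx
    · refine Or.inr fun i hi => ?_
      rcases Nat.lt_or_ge i j with h' | h'
      · exact h i h'
      · have : i = j := by omega
        subst this
        rw [fext, dif_pos hj]
        exact fun hc => hx hc.symm
  · rintro (h | h) i hi
    · subst h
      intro hc
      have hi' : i < n := by omega
      rw [fext, dif_pos hi'] at hc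
      have := congrArg Fin.val (hf hc)
      simp at this
      omega
    · exact h i (by omega)

lemma notmem_Sset {hn : 0 < n} {f : Fin n → Fin n} {i j : ℕ} (hij : i < j) (hi : i < n) :
    f ⟨i, hi⟩ ∉ Sset hn f j := by
  rw [mem_Sset]
  push_neg
  exact ⟨i, hij, by rw [fext, dif_pos hi]⟩

lemma rank_insert_self {g : Fin n → ℕ} {S : Finset (Fin n)} {q : Fin n} (hq : q ∉ S) :
    rank g (insert q S) q = (S.filter fun y => g y ≤ g q).card + 1 := by
  rw [rank, Finset.filter_insert, if_pos le_rfl,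
    Finset.card_insert_of_notMem (fun hc => hq (Finset.mem_filter.1 hc).1)]

/-- circular (clockwise/decreasing) distance from `p` to `x`. -/
def dist (p x : Fin n) : ℕ :=
  if x.val ≤ p.val then p.val - x.val else p.val + n - x.val

lemma dist_inj (p : Fin n) : Function.Injective (fun x => dist p x) := by
  intro x y h
  simp only [dist] at h
  apply Fin.ext
  have hx := x.isLt
  have hy := y.isLt
  have hp := p.isLt
  split_ifs at h <;> omega

lemma dist_pos {p x : Fin n} (h : x ≠ p) : 1 ≤ dist p x := by
  have hvne : x.val ≠ p.val := fun hc => h (Fin.ext hc)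
  have hx := x.isLt
  have hp := p.isLt
  rw [dist]; split_ifs <;> omega

lemma dist_lt {p x : Fin n} (h : x ≠ p) : dist p x < n := by
  have hvne : x.val ≠ p.val := fun hc => h (Fin.ext hc)
  have hx := x.isLt
  have hp := p.isLt
  rw [dist]; split_ifs <;> omega

lemma dist_add (p q x : Fin n) (hq : q ≠ p) (hx1 : x ≠ q) (hx2 : x ≠ p) :
    dist p q + dist q x = dist p x ∨ dist p q + dist q x = dist p x + n := by
  have h1 : q.val ≠ p.val := fun hc => hq (Fin.ext hc)
  have h2 : x.val ≠ q.val := fun hc => hx1 (Fin.ext hc)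
  have h3 : x.val ≠ p.val := fun hc => hx2 (Fin.ext hc)
  have hx := x.isLt
  have hp := p.isLt
  have hqq := q.isLt
  simp only [dist]
  split_ifs <;> omega

end Helpers

section InstA

variable {n : ℕ}

/-- key for the avoiding-permutation instance. -/
def keyA (n : ℕ) : ℕ → Fin n → Fin n → ℕ := fun j p x => if j = 0 then x.val else dist p x

lemma keyA_inj : ∀ j p, Function.Injective (keyA n j p) := by
  intro j p
  cases j with
  | zero => intro x y h; simp only [keyA, if_pos rfl] at h; exact Fin.ext h
  | succ i =>
    intro x y h
    simp only [keyA, Nat.succ_ne_zero, if_false] at h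
    exact dist_inj p h

lemma pattern_iff_dist {a b c : Fin n} (hab : b ≠ a) (hbc : c ≠ b) (hac : c ≠ a) :
    (¬(a < b ∧ b < c) ∧ ¬(c < a ∧ a < b) ∧ ¬(b < c ∧ c < a)) ↔ dist a b + dist b c < n := by
  have h1 : b.val ≠ a.val := fun hc => hab (Fin.ext hc)
  have h2 : c.val ≠ b.val := fun hc => hbc (Fin.ext hc)
  have h3 : c.val ≠ a.val := fun hc => hac (Fin.ext hc)
  have ha := a.isLt
  have hb := b.isLt
  have hc := c.isLt
  simp only [Fin.lt_def, dist]
  split_ifs <;> omega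

/-- The window-transfer lemma for the avoidance instance. -/
lemma transferA {hn : 0 < n} {f : Fin n → Fin n} (hf : Function.Bijective f)
    {i : ℕ} (hi : i + 2 < n) :
    dist (f ⟨i, by linarith⟩) (f ⟨i + 1, by linarith⟩) +
      dist (f ⟨i + 1, by linarith⟩) (f ⟨i + 2, hi⟩) < n ↔
    enc hn (keyA n) f ⟨i + 1, by linarith⟩ + enc hn (keyA n) f ⟨i + 2, hi⟩ ≤ n - (i + 1) := by
  set a := f ⟨i, by linarith⟩ with ha
  set q := f ⟨i + 1, by linarith⟩ with hq
  set c := f ⟨i + 2, hi⟩ with hc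
  have hinj := hf.injective
  have hqa : q ≠ a := fun h => by have := congrArg Fin.val (hinj h); simp at this
  have hcq : c ≠ q := fun h => by have := congrArg Fin.val (hinj h); simp at this
  have hca : c ≠ a := fun h => by have := congrArg Fin.val (hinj h); simp at this
  set S2 := Sset hn f (i + 2) with hS2
  have hqS2 : q ∉ S2 := notmem_Sset (by omega) (by omega)
  have haS2 : a ∉ S2 := notmem_Sset (by omega) (by omega)
  have hcS2 : c ∈ S2 := self_mem_Sset hn hinj ⟨i + 2, hi⟩
  have hS2card : S2.card = n - (i + 2) := Sset_card hn hinj (by omega)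
  set A' := S2.filter (fun y => dist a y ≤ dist a q) with hA'
  set B' := S2.filter (fun y => dist q y ≤ dist q c) with hB'
  have henc1 : enc hn (keyA n) f ⟨i + 1, by linarith⟩ = A'.card + 1 := by
    have e1 : enc hn (keyA n) f ⟨i + 1, by linarith⟩ =
        rank (fun x => dist a x) (Sset hn f (i + 1)) q := rfl
    rw [e1, Sset_succ hinj (show i + 1 < n by omega)]
    exact rank_insert_self hqS2
  have henc2 : enc hn (keyA n) f ⟨i + 2, hi⟩ = B'.card := rfl
  rw [henc1, henc2]
  constructor
  · -- good: disjoint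
    intro hgood
    have hdisj : ∀ x, x ∈ A' → x ∈ B' → False := by
      intro x hxA hxB
      rw [hA', Finset.mem_filter] at hxA
      rw [hB', Finset.mem_filter] at hxB
      have hxq : x ≠ q := fun h => hqS2 (h ▸ hxA.1)
      have hxa : x ≠ a := fun h => haS2 (h ▸ hxA.1)
      have hd1 := dist_pos hxq
      rcases dist_add a q x hqa hxq hxa with h | h
      · omega
      · have := dist_lt hxa
        omega
    have hle := sum_le_of_disjoint (Finset.filter_subset _ _) (Finset.filter_subset _ _) hdisj
    rw [← hA', ← hB'] at hle
    omega
  · -- contrapositive: bad ⟹ sum too big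
    intro hle
    by_contra hbad
    push_neg at hbad
    have hsum' : dist a q + dist q c = dist a c + n := by
      rcases dist_add a q c hqa hcq hca with h | h
      · have := dist_lt hca; omega
      · exact h
    have hcA : c ∈ A' := by
      rw [hA', Finset.mem_filter]
      refine ⟨hcS2, ?_⟩
      have := dist_lt hcq
      omega
    have hcB : c ∈ B' := by
      rw [hB', Finset.mem_filter]
      exact ⟨hcS2, le_rfl⟩
    have hcover : S2 ⊆ A' ∪ B' := by
      intro x hx
      rw [Finset.mem_union]
      by_cases hxB : dist q x ≤ dist q c
      · exact Or.inr (Finset.mem_filter.2 ⟨hx, hxB⟩)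
      · left
        rw [hA', Finset.mem_filter]
        refine ⟨hx, ?_⟩
        have hxq : x ≠ q := fun h => hqS2 (h ▸ hx)
        have hxa : x ≠ a := fun h => haS2 (h ▸ hx)
        rcases dist_add a q x hqa hxq hxa with h | h
        · have := dist_lt hxa
          omega
        · have := dist_lt hxq
          omega
    have := sum_ge_of_cover hcover hcA hcB
    omega

end InstA

section InstB

/-- key for the alternating-permutation instance. -/
def keyB (m : ℕ) : ℕ → Fin m → Fin m → ℕ :=
  fun j _ x => if j % 2 = 0 then x.val else m - 1 - x.val

lemma keyB_inj {m : ℕ} : ∀ j p, Function.Injective (keyB m j p) := by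
  intro j p x y h
  have hx := x.isLt
  have hy := y.isLt
  apply Fin.ext
  by_cases hj : j % 2 = 0
  · simp only [keyB, hj, if_true] at h; omega
  · simp only [keyB, hj, if_false] at h; omega

lemma coreB {m : ℕ} {S : Finset (Fin m)} {u v : Fin m} (hu : u ∉ S) (hv : v ∈ S) :
    v < u ↔ S.card + 2 ≤ (S.filter (fun y => y ≤ u)).card + 1
      + (S.filter (fun y => v ≤ y)).card := by
  have huv : v ≠ u := fun h => hu (h ▸ hv)
  constructor
  · intro hlt
    have hcover : S ⊆ (S.filter (fun y => y ≤ u)) ∪ (S.filter (fun y => v ≤ y)) := by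
      intro x hx
      rw [Finset.mem_union, Finset.mem_filter, Finset.mem_filter]
      by_cases hxu : x ≤ u
      · exact Or.inl ⟨hx, hxu⟩
      · exact Or.inr ⟨hx, le_of_lt (lt_trans hlt (lt_of_not_ge hxu))⟩
    have h := sum_ge_of_cover hcover (Finset.mem_filter.2 ⟨hv, le_of_lt hlt⟩)
      (Finset.mem_filter.2 ⟨hv, le_rfl⟩)
    omega
  · intro hsum
    by_contra hnot
    have hlt : u < v := lt_of_le_of_ne (le_of_not_gt hnot) (Ne.symm huv)
    have hdisj : ∀ x, x ∈ S.filter (fun y => y ≤ u) → x ∈ S.filter (fun y => v ≤ y) → False := by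
      intro x h1 h2
      rw [Finset.mem_filter] at h1 h2
      exact absurd (lt_of_lt_of_le hlt h2.2) (not_lt.2 h1.2)
    have h := sum_le_of_disjoint (Finset.filter_subset _ _) (Finset.filter_subset _ _) hdisj
    omega

lemma coreB' {m : ℕ} {S : Finset (Fin m)} {u v : Fin m} (hu : u ∉ S) (hv : v ∈ S) :
    u < v ↔ S.card + 2 ≤ (S.filter (fun y => u ≤ y)).card + 1
      + (S.filter (fun y => y ≤ v)).card := by
  have huv : v ≠ u := fun h => hu (h ▸ hv)
  constructor
  · intro hlt
    have hcover : S ⊆ (S.filter (fun y => u ≤ y)) ∪ (S.filter (fun y => y ≤ v)) := by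
      intro x hx
      rw [Finset.mem_union, Finset.mem_filter, Finset.mem_filter]
      by_cases hxu : u ≤ x
      · exact Or.inl ⟨hx, hxu⟩
      · exact Or.inr ⟨hx, le_of_lt (lt_trans (lt_of_not_ge hxu) hlt)⟩
    have h := sum_ge_of_cover hcover (Finset.mem_filter.2 ⟨hv, le_of_lt hlt⟩)
      (Finset.mem_filter.2 ⟨hv, le_rfl⟩)
    omega
  · intro hsum
    by_contra hnot
    have hlt : v < u := lt_of_le_of_ne (le_of_not_gt hnot) huv
    have hdisj : ∀ x, x ∈ S.filter (fun y => u ≤ y) → x ∈ S.filter (fun y => y ≤ v) → False := by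
      intro x h1 h2
      rw [Finset.mem_filter] at h1 h2
      exact absurd (lt_of_lt_of_le hlt h1.2) (not_lt.2 h2.2)
    have h := sum_le_of_disjoint (Finset.filter_subset _ _) (Finset.filter_subset _ _) hdisj
    omega

/-- The window-transfer lemma for the alternating instance. -/
lemma transferB {m : ℕ} {hm : 0 < m} {f : Fin m → Fin m} (hf : Function.Bijective f)
    {j : ℕ} (hj : j + 1 < m) :
    (if j % 2 = 0 then f ⟨j + 1, hj⟩ < f ⟨j, by omega⟩ else f ⟨j, by omega⟩ < f ⟨j + 1, hj⟩) ↔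
    m - j + 1 ≤ enc hm (keyB m) f ⟨j, by omega⟩ + enc hm (keyB m) f ⟨j + 1, hj⟩ := by
  have hinj := hf.injective
  set u := f ⟨j, by omega⟩ with hu
  set v := f ⟨j + 1, hj⟩ with hv
  set S1 := Sset hm f (j + 1) with hS1
  have huS1 : u ∉ S1 := notmem_Sset (by omega) (by omega)
  have hvS1 : v ∈ S1 := self_mem_Sset hm hinj ⟨j + 1, hj⟩
  have hcard : S1.card = m - (j + 1) := Sset_card hm hinj (by omega)
  have e1 : enc hm (keyB m) f ⟨j, by omega⟩ =
      (S1.filter (fun y => keyB m j u y ≤ keyB m j u u)).card + 1 := by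
    have e1a : enc hm (keyB m) f ⟨j, by omega⟩ = rank (keyB m j u) (Sset hm f j) u := rfl
    rw [e1a, Sset_succ hinj (show j < m by omega)]
    exact rank_insert_self huS1
  have e2 : enc hm (keyB m) f ⟨j + 1, hj⟩ =
      (S1.filter (fun y => keyB m (j + 1) u y ≤ keyB m (j + 1) u v)).card := rfl
  rw [e1, e2]
  by_cases hpar : j % 2 = 0
  · have hpar' : ¬ ((j + 1) % 2 = 0) := by omega
    have cA : S1.filter (fun y => keyB m j u y ≤ keyB m j u u)
        = S1.filter (fun y => y ≤ u) := by
      apply Finset.filter_congr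
      intro y _
      simp only [keyB, hpar, if_true, Fin.le_def]
    have cB : S1.filter (fun y => keyB m (j + 1) u y ≤ keyB m (j + 1) u v)
        = S1.filter (fun y => v ≤ y) := by
      apply Finset.filter_congr
      intro y _
      have h1 := y.isLt
      have h2 := v.isLt
      simp only [keyB, hpar', if_false, Fin.le_def]
      constructor <;> intro h <;> omega
    rw [cA, cB, if_pos hpar]
    have hcore := coreB huS1 hvS1
    rw [hcard] at hcore
    constructor
    · intro h
      have := hcore.mp h
      omega
    · intro h
      apply hcore.mpr
      omega
  · have hpar' : (j + 1) % 2 = 0 := by omega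
    have cA : S1.filter (fun y => keyB m j u y ≤ keyB m j u u)
        = S1.filter (fun y => u ≤ y) := by
      apply Finset.filter_congr
      intro y _
      have h1 := y.isLt
      have h2 := u.isLt
      simp only [keyB, hpar, if_false, Fin.le_def]
      constructor <;> intro h <;> omega
    have cB : S1.filter (fun y => keyB m (j + 1) u y ≤ keyB m (j + 1) u v)
        = S1.filter (fun y => y ≤ v) := by
      apply Finset.filter_congr
      intro y _
      simp only [keyB, hpar', if_true, Fin.le_def]
    rw [cA, cB, if_neg hpar]
    have hcore := coreB' huS1 hvS1
    rw [hcard] at hcore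
    constructor
    · intro h
      have := hcore.mp h
      omega
    · intro h
      apply hcore.mpr
      omega

end InstB

section Assembly

/-- the avoidance property. -/
def PAprop (n : ℕ) (f : Fin n → Fin n) : Prop :=
  ∀ (i : ℕ) (h : i + 2 < n),
    ¬(f ⟨i, by linarith⟩ < f ⟨i + 1, by linarith⟩ ∧ f ⟨i + 1, by linarith⟩ < f ⟨i + 2, h⟩) ∧
    ¬(f ⟨i + 2, h⟩ < f ⟨i, by linarith⟩ ∧ f ⟨i, by linarith⟩ < f ⟨i + 1, by linarith⟩) ∧
    ¬(f ⟨i + 1, by linarith⟩ < f ⟨i + 2, h⟩ ∧ f ⟨i + 2, h⟩ < f ⟨i, by linarith⟩)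

/-- the alternating property. -/
def PBprop (m : ℕ) (f : Fin m → Fin m) : Prop :=
  ∀ (i : ℕ) (h : i + 1 < m),
    if i % 2 = 0 then f ⟨i + 1, h⟩ < f ⟨i, by linarith⟩
    else f ⟨i, by linarith⟩ < f ⟨i + 1, h⟩

def CAprop (n : ℕ) (b : Fin n → ℕ) : Prop :=
  ∀ (i : ℕ) (h : i + 2 < n), b ⟨i + 1, by linarith⟩ + b ⟨i + 2, h⟩ ≤ n - (i + 1)

def CBprop (m : ℕ) (b : Fin m → ℕ) : Prop :=
  ∀ (i : ℕ) (h : i + 1 < m), m - i + 1 ≤ b ⟨i, by linarith⟩ + b ⟨i + 1, h⟩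

/-- subtype of perms with property P vs subtype of bijective functions. -/
noncomputable def permEquiv {k : ℕ} (P : (Fin k → Fin k) → Prop) :
    {π : Equiv.Perm (Fin k) // P ⇑π} ≃ {f : Fin k → Fin k // Function.Bijective f ∧ P f} where
  toFun π := ⟨⇑π.1, π.1.bijective, π.2⟩
  invFun f := ⟨Equiv.ofBijective f.1 f.2.1, f.2.2⟩
  left_inv π := by
    apply Subtype.ext
    apply Equiv.ext
    intro x
    rfl
  right_inv f := by
    apply Subtype.ext
    rfl

lemma PA_iff {n : ℕ} (hn : 0 < n) {f : Fin n → Fin n} (hf : Function.Bijective f) :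
    PAprop n f ↔ CAprop n (fun j => enc hn (keyA n) f j) := by
  refine forall_congr' fun i => forall_congr' fun h => ?_
  have hinj := hf.injective
  have h1 : f ⟨i + 1, by linarith⟩ ≠ f ⟨i, by linarith⟩ := fun hc => by
    have := congrArg Fin.val (hinj hc); simp at this
  have h2 : f ⟨i + 2, h⟩ ≠ f ⟨i + 1, by linarith⟩ := fun hc => by
    have := congrArg Fin.val (hinj hc); simp at this
  have h3 : f ⟨i + 2, h⟩ ≠ f ⟨i, by linarith⟩ := fun hc => by
    have := congrArg Fin.val (hinj hc); simp at this
  exact (pattern_iff_dist h1 h2 h3).trans (transferA hf h)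

lemma PB_iff {m : ℕ} (hm : 0 < m) {f : Fin m → Fin m} (hf : Function.Bijective f) :
    PBprop m f ↔ CBprop m (fun j => enc hm (keyB m) f j) := by
  refine forall_congr' fun i => forall_congr' fun h => ?_
  exact transferB hf h

noncomputable def equivA (n : ℕ) (hn : 0 < n) :
    {π : Equiv.Perm (Fin n) // PAprop n ⇑π} ≃
    {b : Fin n → ℕ // (∀ j : Fin n, 1 ≤ b j ∧ b j ≤ n - j.val) ∧ CAprop n b} :=
  (permEquiv (PAprop n)).trans <|
    ((Equiv.subtypeSubtypeEquivSubtypeInter _ _).symm.trans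
      (((genEquiv hn (keyA n) keyA_inj).subtypeEquiv
        (fun x => PA_iff hn x.2)).trans
        (Equiv.subtypeSubtypeEquivSubtypeInter _ _)))

noncomputable def equivB (m : ℕ) (hm : 0 < m) :
    {π : Equiv.Perm (Fin m) // PBprop m ⇑π} ≃
    {b : Fin m → ℕ // (∀ j : Fin m, 1 ≤ b j ∧ b j ≤ m - j.val) ∧ CBprop m b} :=
  (permEquiv (PBprop m)).trans <|
    ((Equiv.subtypeSubtypeEquivSubtypeInter _ _).symm.trans
      (((genEquiv hm (keyB m) keyB_inj).subtypeEquiv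
        (fun x => PB_iff hm x.2)).trans
        (Equiv.subtypeSubtypeEquivSubtypeInter _ _)))

/-- translation between the two code sets. -/
noncomputable def codesEquiv (n : ℕ) (hn : 2 ≤ n) :
    {b : Fin n → ℕ // (∀ j : Fin n, 1 ≤ b j ∧ b j ≤ n - j.val) ∧ CAprop n b} ≃
    Fin n × {c : Fin (n - 1) → ℕ //
      (∀ j : Fin (n - 1), 1 ≤ c j ∧ c j ≤ (n - 1) - j.val) ∧ CBprop (n - 1) c} where
  toFun b :=
    (⟨b.1 ⟨0, by omega⟩ - 1, by have h := b.2.1 ⟨0, by omega⟩; omega⟩,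
     ⟨fun i => n - i.val - b.1 ⟨i.val + 1, by omega⟩, by
        obtain ⟨hrange, hCA⟩ := b.2
        constructor
        · intro j
          have h1 : 1 ≤ b.1 ⟨j.val + 1, by omega⟩ ∧
              b.1 ⟨j.val + 1, by omega⟩ ≤ n - (j.val + 1) := hrange ⟨j.val + 1, by omega⟩
          have h2 := j.isLt
          dsimp only
          omega
        · intro i h
          have hCAi : b.1 ⟨i + 1, by omega⟩ + b.1 ⟨i + 1 + 1, by omega⟩ ≤ n - (i + 1) :=
            hCA i (by omega)
          have h1 : 1 ≤ b.1 ⟨i + 1, by omega⟩ ∧ b.1 ⟨i + 1, by omega⟩ ≤ n - (i + 1) :=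
            hrange ⟨i + 1, by omega⟩
          have h2 : 1 ≤ b.1 ⟨i + 1 + 1, by omega⟩ ∧ b.1 ⟨i + 1 + 1, by omega⟩ ≤ n - (i + 2) :=
            hrange ⟨i + 1 + 1, by omega⟩
          dsimp only
          omega⟩)
  invFun vc :=
    ⟨fun j => if h0 : j.val = 0 then vc.1.val + 1
      else n - (j.val - 1) - vc.2.1 ⟨j.val - 1, by omega⟩, by
      obtain ⟨hrange, hCB⟩ := vc.2.2
      constructor
      · intro j
        dsimp only
        by_cases h0 : j.val = 0
        · rw [dif_pos h0]
          have := vc.1.isLt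
          omega
        · rw [dif_neg h0]
          have h1 : 1 ≤ vc.2.1 ⟨j.val - 1, by omega⟩ ∧
              vc.2.1 ⟨j.val - 1, by omega⟩ ≤ (n - 1) - (j.val - 1) :=
            hrange ⟨j.val - 1, by omega⟩
          have h2 := j.isLt
          omega
      · intro i h
        dsimp only
        rw [dif_neg (show ¬ (i + 1 = 0) by omega), dif_neg (show ¬ (i + 2 = 0) by omega)]
        simp only [show i + 1 - 1 = i from rfl, show i + 2 - 1 = i + 1 from rfl]
        have hCBi : (n - 1) - i + 1 ≤ vc.2.1 ⟨i, by omega⟩ + vc.2.1 ⟨i + 1, by omega⟩ :=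
          hCB i (by omega)
        have h1 : 1 ≤ vc.2.1 ⟨i, by omega⟩ ∧ vc.2.1 ⟨i, by omega⟩ ≤ (n - 1) - i :=
          hrange ⟨i, by omega⟩
        have h2 : 1 ≤ vc.2.1 ⟨i + 1, by omega⟩ ∧ vc.2.1 ⟨i + 1, by omega⟩ ≤ (n - 1) - (i + 1) :=
          hrange ⟨i + 1, by omega⟩
        omega⟩
  left_inv b := by
    apply Subtype.ext
    funext j
    dsimp only
    by_cases h0 : j.val = 0
    · rw [dif_pos h0]
      have hj : j = ⟨0, by omega⟩ := Fin.ext h0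
      rw [hj]
      have h1 : 1 ≤ b.1 ⟨0, by omega⟩ ∧ b.1 ⟨0, by omega⟩ ≤ n - 0 := b.2.1 ⟨0, by omega⟩
      omega
    · rw [dif_neg h0]
      have h2 := j.isLt
      have hj : (⟨j.val - 1 + 1, by omega⟩ : Fin n) = j :=
        Fin.ext (show j.val - 1 + 1 = j.val by omega)
      rw [hj]
      have h1 : 1 ≤ b.1 j ∧ b.1 j ≤ n - j.val := b.2.1 j
      omega
  right_inv vc := by
    obtain ⟨v, c⟩ := vc
    refine Prod.ext ?_ ?_
    · apply Fin.ext
      dsimp only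
      rw [dif_pos rfl]
      omega
    · apply Subtype.ext
      funext i
      dsimp only
      rw [dif_neg (show ¬ (i.val + 1 = 0) by omega)]
      simp only [show i.val + 1 - 1 = i.val from rfl]
      have hi : (⟨i.val, by omega⟩ : Fin (n - 1)) = i := Fin.ext rfl
      rw [hi]
      have h1 : 1 ≤ c.1 i ∧ c.1 i ≤ (n - 1) - i.val := c.2.1 i
      have h2 := i.isLt
      omega

lemma euler_eq (m : ℕ) (hm : 0 < m) :
    eulerNumber m = Nat.card {b : Fin m → ℕ //
      (∀ j : Fin m, 1 ≤ b j ∧ b j ≤ m - j.val) ∧ CBprop m b} := by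
  unfold eulerNumber
  exact Nat.card_congr (equivB m hm)

end Assembly

end ZigzagAux



/-- For n ≥ 2, the number of permutations of {1,…,n} avoiding the three
consecutive patterns 123, 231, 312 equals n · E_{n-1}. -/
theorem consecutive_avoid_123_231_312_count (n : ℕ) (hn : 2 ≤ n) :
    Nat.card {π : Equiv.Perm (Fin n) //
      ∀ (i : ℕ) (h : i + 2 < n),
        -- no consecutive occurrence of 123: π(i) < π(i+1) < π(i+2)
        ¬(π ⟨i, by omega⟩ < π ⟨i + 1, by omega⟩ ∧ π ⟨i + 1, by omega⟩ < π ⟨i + 2, h⟩) ∧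
        -- no consecutive occurrence of 231: π(i+2) < π(i) < π(i+1)
        ¬(π ⟨i + 2, h⟩ < π ⟨i, by omega⟩ ∧ π ⟨i, by omega⟩ < π ⟨i + 1, by omega⟩) ∧
        -- no consecutive occurrence of 312: π(i+1) < π(i+2) < π(i)
        ¬(π ⟨i + 1, by omega⟩ < π ⟨i + 2, h⟩ ∧ π ⟨i + 2, h⟩ < π ⟨i, by omega⟩)} =
      n * eulerNumber (n - 1) := by
  have h0 : 0 < n := by omega
  calc Nat.card {π : Equiv.Perm (Fin n) // ZigzagAux.PAprop n ⇑π}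
      = Nat.card (Fin n × {c : Fin (n - 1) → ℕ //
          (∀ j : Fin (n - 1), 1 ≤ c j ∧ c j ≤ (n - 1) - j.val) ∧ ZigzagAux.CBprop (n - 1) c}) :=
        Nat.card_congr ((ZigzagAux.equivA n h0).trans (ZigzagAux.codesEquiv n hn))
    _ = Nat.card (Fin n) * Nat.card {c : Fin (n - 1) → ℕ //
          (∀ j : Fin (n - 1), 1 ≤ c j ∧ c j ≤ (n - 1) - j.val) ∧ ZigzagAux.CBprop (n - 1) c} :=
        Nat.card_prod _ _
    _ = n * eulerNumber (n - 1) := by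
        rw [Nat.card_eq_fintype_card, Fintype.card_fin,
          ← ZigzagAux.euler_eq (n - 1) (by omega)]
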